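/- Under the hypotheses that there exists an ideal I of O_{X×X,(x,x)} with I·I_2((I_k(M))_D) ⊆ closure(I_{2k}(M_D)) and I_{2k}(h_D, M_D) ⊆ closure(I·I_2((I_k(h,M))_D)), if h ∈ M_{S_3} then h ∈ M_{S_1}. -/
import Mathlib


/-- The double of `h ∈ R^p` along the two "pullback" homomorphisms `φ1, φ2 : R →+* S`. -/
def Lip.double {R S : Type*} [CommRing R] [CommRing S] {p : ℕ}
    (φ1 φ2 : R →+* S) (h : Fin p → R) : Fin p ⊕ Fin p → S :=
  Sum.elim (fun i => φ1 (h i)) (fun i => φ2 (h i))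

/-- Integral closure of a submodule `N ⊆ A^ι` by the curve criterion. -/
def Lip.curveCl {A : Type*} [CommRing A] {ι : Type*} (N : Submodule A (ι → A)) :
    Set (ι → A) :=
  {h | ∀ φ : A →+* PowerSeries ℂ,
    (fun i => φ (h i)) ∈
      Submodule.span (PowerSeries ℂ) ((fun m : ι → A => fun i => φ (m i)) '' (N : Set (ι → A)))}

/-- Integral closure of an ideal by the curve criterion. -/
def Lip.clIdeal {A : Type*} [CommRing A] (J : Ideal A) : Set A :=
  {a | ∀ φ : A →+* PowerSeries ℂ, φ a ∈ Ideal.map φ J}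

/-- The double of an element of `R`. -/
def Lip.idDouble {R S : Type*} [CommRing R] [CommRing S] (φ1 φ2 : R →+* S) (a : R) :
    Fin 2 → S := ![φ1 a, φ2 a]

/-- The double of an ideal `I ⊆ R`. -/
def Lip.idealDouble {R S : Type*} [CommRing R] [CommRing S] (φ1 φ2 : R →+* S)
    (I : Ideal R) : Submodule S (Fin 2 → S) :=
  Submodule.span S (Lip.idDouble φ1 φ2 '' (I : Set R))

/-- The Lipschitz saturation of an ideal `I ⊆ R`: `a ∈ I_S ↔ a_D ∈ closure (I_D)`. -/
def Lip.sat {R S : Type*} [CommRing R] [CommRing S] (φ1 φ2 : R →+* S) (I : Ideal R) :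
    Set R :=
  {a | Lip.idDouble φ1 φ2 a ∈ Lip.curveCl (Lip.idealDouble φ1 φ2 I)}

/-- The generator matrix `[M_D] = [[M], 0; [M]', Δ·[M]']` of the double `M_D`. -/
def Lip.doubleMatrix {R S : Type*} [CommRing R] [CommRing S] {p r n : ℕ}
    (φ1 φ2 : R →+* S) (z : Fin n → R) (g : Fin r → (Fin p → R)) :
    Matrix (Fin p ⊕ Fin p) (Fin r ⊕ Fin n × Fin r) S :=
  fun i c =>
    match i, c with
    | Sum.inl i, Sum.inl j => φ1 (g j i)
    | Sum.inr i, Sum.inl j => φ2 (g j i)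
    | Sum.inl _, Sum.inr _ => 0
    | Sum.inr i, Sum.inr (a, j) => (φ1 (z a) - φ2 (z a)) * φ2 (g j i)

/-- The ideal `I_{2k}(M_D)` of `2k×2k` minors of the generator matrix of `M_D`. -/
def Lip.I2kM {R S : Type*} [CommRing R] [CommRing S] {p r n : ℕ}
    (φ1 φ2 : R →+* S) (z : Fin n → R) (g : Fin r → (Fin p → R)) (k : ℕ) : Ideal S :=
  Ideal.span {d : S | ∃ (RI : Fin (2 * k) → Fin p ⊕ Fin p)
      (CJ : Fin (2 * k) → Fin r ⊕ Fin n × Fin r),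
    d = Matrix.det (Matrix.of fun a b : Fin (2 * k) =>
      Lip.doubleMatrix φ1 φ2 z g (RI a) (CJ b))}

/-- The ideal `I_{2k}(h_D, M_D)` of `2k×2k` minors of the generator matrix of the
module `(h_D, M_D)`, whose columns are `h_D` together with the columns of `[M_D]`. -/
def Lip.I2kHM {R S : Type*} [CommRing R] [CommRing S] {p r n : ℕ}
    (φ1 φ2 : R →+* S) (z : Fin n → R) (g : Fin r → (Fin p → R)) (h : Fin p → R)
    (k : ℕ) : Ideal S :=
  Ideal.span {d : S | ∃ (RI : Fin (2 * k) → Fin p ⊕ Fin p)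
      (CJ : Fin (2 * k) → Unit ⊕ (Fin r ⊕ Fin n × Fin r)),
    d = Matrix.det (Matrix.of fun a b : Fin (2 * k) =>
      Sum.elim (fun _ => Lip.double φ1 φ2 h (RI a))
        (fun c => Lip.doubleMatrix φ1 φ2 z g (RI a) c) (CJ b))}

/-- The generator matrix of the double `(I_k(N))_D` of the ideal of `k×k` minors of a
generator matrix with columns `g`. -/
def Lip.minorDoubleMatrix {R S : Type*} [CommRing R] [CommRing S] {p r n : ℕ}
    (φ1 φ2 : R →+* S) (z : Fin n → R) (g : Fin r → (Fin p → R)) (k : ℕ) :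
    Matrix (Fin 2) (((Fin k → Fin p) × (Fin k → Fin r)) ⊕
      (Fin n × ((Fin k → Fin p) × (Fin k → Fin r)))) S :=
  fun i c =>
    match i, c with
    | 0, Sum.inl (I, J) => φ1 (Matrix.det (Matrix.of fun a b : Fin k => g (J b) (I a)))
    | 1, Sum.inl (I, J) => φ2 (Matrix.det (Matrix.of fun a b : Fin k => g (J b) (I a)))
    | 0, Sum.inr _ => 0
    | 1, Sum.inr (i, (K, L)) =>
        (φ1 (z i) - φ2 (z i)) * φ2 (Matrix.det (Matrix.of fun a b : Fin k => g (L b) (K a)))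

/-- The ideal of `2×2` minors of a `2`-row matrix. -/
def Lip.I2 {S : Type*} [CommRing S] {ι : Type*} (E : Matrix (Fin 2) ι S) : Ideal S :=
  Ideal.span {d : S | ∃ c1 c2 : ι, d = E 0 c1 * E 1 c2 - E 0 c2 * E 1 c1}

namespace LipAux

open Lip

variable {R S : Type*} [CommRing R] [CommRing S]

lemma mem_clIdeal {J : Ideal S} {a : S} :
    a ∈ Lip.clIdeal J ↔ ∀ ψ : S →+* PowerSeries ℂ, ψ a ∈ Ideal.map ψ J := Iff.rfl

lemma map_le {J J' : Ideal S} (h : (J' : Set S) ⊆ Lip.clIdeal J)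
    (ψ : S →+* PowerSeries ℂ) : Ideal.map ψ J' ≤ Ideal.map ψ J := by
  rw [Ideal.map_le_iff_le_comap]
  intro x hx
  exact h hx ψ

lemma cl_trans {J J' : Ideal S} (h : (J' : Set S) ⊆ Lip.clIdeal J) :
    Lip.clIdeal J' ⊆ Lip.clIdeal J := fun _ ha ψ => map_le h ψ (ha ψ)

lemma mul_cl {I J J' : Ideal S} (h : (J' : Set S) ⊆ Lip.clIdeal J) :
    ((I * J' : Ideal S) : Set S) ⊆ Lip.clIdeal (I * J) := by
  intro a ha ψ
  have h2 : Ideal.map ψ (I * J') ≤ Ideal.map ψ (I * J) := by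
    rw [Ideal.map_mul, Ideal.map_mul]
    exact Ideal.mul_mono le_rfl (map_le h ψ)
  exact h2 (Ideal.mem_map_of_mem ψ ha)

section Key

variable {p r n k : ℕ} (φ1 φ2 : R →+* S) (z : Fin n → R) (g : Fin r → (Fin p → R))

/-- The ideal generated by the differences `φ1 (z i) - φ2 (z i)`. -/
def W (φ1 φ2 : R →+* S) (z : Fin n → R) : Ideal S :=
  Ideal.span (Set.range fun i => φ1 (z i) - φ2 (z i))

/-- The ideal of `k × k` minors of `g`. -/
def Jg (g : Fin r → (Fin p → R)) (k : ℕ) : Ideal R :=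
  Ideal.span {d : R | ∃ (I' : Fin k → Fin p) (J' : Fin k → Fin r),
    d = Matrix.det (Matrix.of fun a b : Fin k => g (J' b) (I' a))}

/-- The column span of the generator matrix of `(I_k(M))_D`. -/
def ColG (φ1 φ2 : R →+* S) (z : Fin n → R) (g : Fin r → (Fin p → R)) (k : ℕ) :
    Submodule S (Fin 2 → S) :=
  Submodule.span S (Set.range fun c => fun i => Lip.minorDoubleMatrix φ1 φ2 z g k i c)

lemma vec2_add (a b c d : S) : (![a, b] : Fin 2 → S) + ![c, d] = ![a + c, b + d] := by
  funext i; fin_cases i <;> simp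

lemma vec2_smul (s a b : S) : s • (![a, b] : Fin 2 → S) = ![s * a, s * b] := by
  funext i; fin_cases i <;> simp

lemma vec2_zero : (![0, 0] : Fin 2 → S) = 0 := by
  funext i; fin_cases i <;> simp

lemma vec2_add0 (a b : S) : (![0, a + b] : Fin 2 → S) = ![0, a] + ![0, b] := by
  funext i; fin_cases i <;> simp

lemma vec2_smul0 (s a : S) : (![0, s * a] : Fin 2 → S) = s • ![0, a] := by
  funext i; fin_cases i <;> simp

lemma colInl (I' : Fin k → Fin p) (J' : Fin k → Fin r) :
    ![φ1 (Matrix.det (Matrix.of fun a b : Fin k => g (J' b) (I' a))),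
      φ2 (Matrix.det (Matrix.of fun a b : Fin k => g (J' b) (I' a)))] ∈ ColG φ1 φ2 z g k :=
  Submodule.subset_span ⟨Sum.inl (I', J'), by funext i; fin_cases i <;> rfl⟩

lemma colInr (i0 : Fin n) (I' : Fin k → Fin p) (J' : Fin k → Fin r) :
    ![0, (φ1 (z i0) - φ2 (z i0)) *
        φ2 (Matrix.det (Matrix.of fun a b : Fin k => g (J' b) (I' a)))] ∈ ColG φ1 φ2 z g k :=
  Submodule.subset_span ⟨Sum.inr (i0, (I', J')), by funext i; fin_cases i <;> rfl⟩

lemma B1 {w : S} (hw : w ∈ W φ1 φ2 z) (I' : Fin k → Fin p) (J' : Fin k → Fin r) :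
    ![0, w * φ2 (Matrix.det (Matrix.of fun a b : Fin k => g (J' b) (I' a)))]
      ∈ ColG φ1 φ2 z g k := by
  induction hw using Submodule.span_induction with
  | mem x hx =>
    obtain ⟨i0, rfl⟩ := hx
    exact colInr φ1 φ2 z g i0 I' J'
  | zero => rw [zero_mul, vec2_zero]; exact Submodule.zero_mem _
  | add x y _ _ hx hy =>
    rw [add_mul, vec2_add0]
    exact Submodule.add_mem _ hx hy
  | smul a x _ hx =>
    rw [smul_eq_mul, mul_assoc, vec2_smul0]
    exact Submodule.smul_mem _ a hx

lemma B2 {u : R} (hu : u ∈ Jg g k) {w : S} (hw : w ∈ W φ1 φ2 z) :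
    ![0, w * φ2 u] ∈ ColG φ1 φ2 z g k := by
  induction hu using Submodule.span_induction generalizing w with
  | mem x hx =>
    obtain ⟨I', J', rfl⟩ := hx
    exact B1 φ1 φ2 z g hw I' J'
  | zero => rw [map_zero, mul_zero, vec2_zero]; exact Submodule.zero_mem _
  | add x y _ _ hx hy =>
    rw [map_add, mul_add, vec2_add0]
    exact Submodule.add_mem _ (hx hw) (hy hw)
  | smul a x _ hx =>
    rw [smul_eq_mul, map_mul, ← mul_assoc]
    exact hx (Ideal.mul_mem_right _ _ hw)

lemma B3 (hz : ∀ α : R, φ1 α - φ2 α ∈ Ideal.span (Set.range fun i => φ1 (z i) - φ2 (z i)))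
    {u : R} (hu : u ∈ Jg g k) : ![φ1 u, φ2 u] ∈ ColG φ1 φ2 z g k := by
  induction hu using Submodule.span_induction with
  | mem x hx =>
    obtain ⟨I', J', rfl⟩ := hx
    exact colInl φ1 φ2 z g I' J'
  | zero => rw [map_zero, map_zero, vec2_zero]; exact Submodule.zero_mem _
  | add x y _ _ hx hy =>
    rw [map_add, map_add, ← vec2_add]
    exact Submodule.add_mem _ hx hy
  | smul a x _ hx =>
    have hmem : φ2 a - φ1 a ∈ W φ1 φ2 z := by
      have := hz a
      exact (neg_sub (φ1 a) (φ2 a)) ▸ Submodule.neg_mem _ this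
    have key : (![φ1 (a • x), φ2 (a • x)] : Fin 2 → S) =
        φ1 a • ![φ1 x, φ2 x] + ![0, (φ2 a - φ1 a) * φ2 x] := by
      funext i
      fin_cases i <;> simp [smul_eq_mul, map_mul] <;> ring
    rw [key]
    exact Submodule.add_mem _ (Submodule.smul_mem _ _ hx) (B2 φ1 φ2 z g ‹x ∈ Jg g k› hmem)

lemma B4 {w : S} (hw : w ∈ W φ1 φ2 z) {v : Fin 2 → S} (hv : v ∈ ColG φ1 φ2 z g k) :
    ![0, w * v 1] ∈ ColG φ1 φ2 z g k := by
  induction hv using Submodule.span_induction with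
  | mem x hx =>
    obtain ⟨c, rfl⟩ := hx
    match c with
    | Sum.inl (I', J') => exact B1 φ1 φ2 z g hw I' J'
    | Sum.inr (i0, (I', J')) =>
      show ![0, w * ((φ1 (z i0) - φ2 (z i0)) * φ2 _)] ∈ _
      rw [← mul_assoc]
      exact B1 φ1 φ2 z g (Ideal.mul_mem_right _ _ hw) I' J'
  | zero =>
    show ![0, w * 0] ∈ _
    rw [mul_zero, vec2_zero]; exact Submodule.zero_mem _
  | add x y _ _ hx hy =>
    show ![0, w * (x 1 + y 1)] ∈ _
    rw [mul_add, vec2_add0]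
    exact Submodule.add_mem _ hx hy
  | smul a x _ hx =>
    show ![0, w * (a * x 1)] ∈ _
    rw [show w * (a * x 1) = a * (w * x 1) by ring, vec2_smul0]
    exact Submodule.smul_mem _ a hx

lemma B5 {v : Fin 2 → S} (hv : v ∈ ColG φ1 φ2 z g k) :
    ∀ v' ∈ ColG φ1 φ2 z g k,
      v 0 * v' 1 - v' 0 * v 1 ∈ Lip.I2 (Lip.minorDoubleMatrix φ1 φ2 z g k) := by
  induction hv using Submodule.span_induction with
  | mem x hx =>
    obtain ⟨c, rfl⟩ := hx
    intro v' hv'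
    induction hv' using Submodule.span_induction with
    | mem y hy =>
      obtain ⟨c', rfl⟩ := hy
      exact Ideal.subset_span ⟨c, c', rfl⟩
    | zero => simp
    | add y y' _ _ hy hy' =>
      have e : ∀ A : Fin 2 → S, A 0 * (y + y') 1 - (y + y') 0 * A 1 =
          (A 0 * y 1 - y 0 * A 1) + (A 0 * y' 1 - y' 0 * A 1) := by
        intro A; simp only [Pi.add_apply]; ring
      have e2 := e (fun i => Lip.minorDoubleMatrix φ1 φ2 z g k i c)
      beta_reduce at e2
      beta_reduce
      rw [e2]
      exact Ideal.add_mem _ hy hy'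
    | smul a y _ hy =>
      have e : ∀ A : Fin 2 → S, A 0 * (a • y) 1 - (a • y) 0 * A 1 =
          a * (A 0 * y 1 - y 0 * A 1) := by
        intro A; simp only [Pi.smul_apply, smul_eq_mul]; ring
      have e2 := e (fun i => Lip.minorDoubleMatrix φ1 φ2 z g k i c)
      beta_reduce at e2
      beta_reduce
      rw [e2]
      exact Ideal.mul_mem_left _ a hy
  | zero => intro v' _; simp
  | add x y _ _ hx hy =>
    intro v' hv'
    have e : (x + y) 0 * v' 1 - v' 0 * (x + y) 1 =
        (x 0 * v' 1 - v' 0 * x 1) + (y 0 * v' 1 - v' 0 * y 1) := by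
      simp only [Pi.add_apply]; ring
    rw [e]
    exact Ideal.add_mem _ (hx v' hv') (hy v' hv')
  | smul a x _ hx =>
    intro v' hv'
    have e : (a • x) 0 * v' 1 - v' 0 * (a • x) 1 =
        a * (x 0 * v' 1 - v' 0 * x 1) := by
      simp only [Pi.smul_apply, smul_eq_mul]; ring
    rw [e]
    exact Ideal.mul_mem_left _ a (hx v' hv')


/-- The `ψ`-image span of the columns of the generator matrix of `(I_k(M))_D`. -/
noncomputable def NG (φ1 φ2 : R →+* S) (z : Fin n → R) (g : Fin r → (Fin p → R)) (k : ℕ)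
    (ψ : S →+* PowerSeries ℂ) : Submodule (PowerSeries ℂ) (Fin 2 → PowerSeries ℂ) :=
  Submodule.span (PowerSeries ℂ)
    ((fun v : Fin 2 → S => fun i => ψ (v i)) '' (ColG φ1 φ2 z g k : Set (Fin 2 → S)))

lemma C1 (ψ : S →+* PowerSeries ℂ) {v : Fin 2 → S} (hv : v ∈ ColG φ1 φ2 z g k) :
    (fun i => ψ (v i)) ∈ NG φ1 φ2 z g k ψ :=
  Submodule.subset_span ⟨v, hv, rfl⟩

lemma C2 (ψ : S →+* PowerSeries ℂ) {w : S} (hw : w ∈ W φ1 φ2 z)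
    {x : Fin 2 → PowerSeries ℂ} (hx : x ∈ NG φ1 φ2 z g k ψ) :
    ![0, ψ w * x 1] ∈ NG φ1 φ2 z g k ψ := by
  induction hx using Submodule.span_induction with
  | mem x hx =>
    obtain ⟨v, hv, rfl⟩ := hx
    have e : (![0, ψ w * (fun i => ψ (v i)) 1] : Fin 2 → PowerSeries ℂ) =
        fun i => ψ ((![0, w * v 1] : Fin 2 → S) i) := by
      funext i
      fin_cases i <;> simp
    rw [e]
    exact C1 φ1 φ2 z g ψ (B4 φ1 φ2 z g hw hv)
  | zero =>
    show (![0, ψ w * 0] : Fin 2 → PowerSeries ℂ) ∈ _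
    rw [mul_zero, vec2_zero]
    exact Submodule.zero_mem _
  | add x y _ _ hx hy =>
    show (![0, ψ w * (x 1 + y 1)] : Fin 2 → PowerSeries ℂ) ∈ _
    rw [mul_add, vec2_add0]
    exact Submodule.add_mem _ hx hy
  | smul a x _ hx =>
    show (![0, ψ w * (a * x 1)] : Fin 2 → PowerSeries ℂ) ∈ _
    rw [show ψ w * (a * x 1) = a * (ψ w * x 1) by ring, vec2_smul0]
    exact Submodule.smul_mem _ a hx

lemma C3 (ψ : S →+* PowerSeries ℂ) {x : Fin 2 → PowerSeries ℂ}
    (hx : x ∈ NG φ1 φ2 z g k ψ) :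
    ∀ y ∈ NG φ1 φ2 z g k ψ,
      x 0 * y 1 - y 0 * x 1 ∈ Ideal.map ψ (Lip.I2 (Lip.minorDoubleMatrix φ1 φ2 z g k)) := by
  induction hx using Submodule.span_induction with
  | mem x hx =>
    obtain ⟨v, hv, rfl⟩ := hx
    intro y hy
    induction hy using Submodule.span_induction with
    | mem y hy =>
      obtain ⟨v', hv', rfl⟩ := hy
      have e : (fun i => ψ (v i)) 0 * (fun i => ψ (v' i)) 1 -
          (fun i => ψ (v' i)) 0 * (fun i => ψ (v i)) 1 =
          ψ (v 0 * v' 1 - v' 0 * v 1) := by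
        simp [map_mul, map_sub]
      rw [e]
      exact Ideal.mem_map_of_mem ψ (B5 φ1 φ2 z g hv v' hv')
    | zero => simp
    | add y y' _ _ hy hy' =>
      have e : ∀ A : Fin 2 → PowerSeries ℂ, A 0 * (y + y') 1 - (y + y') 0 * A 1 =
          (A 0 * y 1 - y 0 * A 1) + (A 0 * y' 1 - y' 0 * A 1) := by
        intro A; simp only [Pi.add_apply]; ring
      have e2 := e fun i => ψ (v i)
      beta_reduce at e2
      beta_reduce
      rw [e2]
      exact Ideal.add_mem _ hy hy'
    | smul a y _ hy =>
      have e : ∀ A : Fin 2 → PowerSeries ℂ, A 0 * (a • y) 1 - (a • y) 0 * A 1 =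
          a * (A 0 * y 1 - y 0 * A 1) := by
        intro A; simp only [Pi.smul_apply, smul_eq_mul]; ring
      have e2 := e fun i => ψ (v i)
      beta_reduce at e2
      beta_reduce
      rw [e2]
      exact Ideal.mul_mem_left _ a hy
  | zero => intro y _; simp
  | add x x' _ _ hx hx' =>
    intro y hy
    have e : (x + x') 0 * y 1 - y 0 * (x + x') 1 =
        (x 0 * y 1 - y 0 * x 1) + (x' 0 * y 1 - y 0 * x' 1) := by
      simp only [Pi.add_apply]; ring
    rw [e]
    exact Ideal.add_mem _ (hx y hy) (hx' y hy)
  | smul a x _ hx =>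
    intro y hy
    have e : (a • x) 0 * y 1 - y 0 * (a • x) 1 = a * (x 0 * y 1 - y 0 * x 1) := by
      simp only [Pi.smul_apply, smul_eq_mul]; ring
    rw [e]
    exact Ideal.mul_mem_left _ a (hx y hy)

lemma idealDouble_le (hz : ∀ α : R, φ1 α - φ2 α ∈
      Ideal.span (Set.range fun i => φ1 (z i) - φ2 (z i))) :
    Lip.idealDouble φ1 φ2 (Jg g k) ≤ ColG φ1 φ2 z g k := by
  rw [Lip.idealDouble, Submodule.span_le]
  rintro _ ⟨u, hu, rfl⟩
  exact B3 φ1 φ2 z g hz hu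

set_option maxHeartbeats 1000000 in
lemma D (hz : ∀ α : R, φ1 α - φ2 α ∈
      Ideal.span (Set.range fun i => φ1 (z i) - φ2 (z i)))
    (h : Fin p → R)
    (hsat : ((Ideal.span {d : R | ∃ (I' : Fin k → Fin p) (J' : Fin k → Fin (r + 1)),
        d = Matrix.det (Matrix.of fun a b : Fin k =>
          (Fin.cons h g : Fin (r + 1) → Fin p → R) (J' b) (I' a))} : Ideal R) : Set R)
      ⊆ Lip.sat φ1 φ2 (Jg g k))
    (ψ : S →+* PowerSeries ℂ)
    (c : ((Fin k → Fin p) × (Fin k → Fin (r + 1))) ⊕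
      (Fin n × ((Fin k → Fin p) × (Fin k → Fin (r + 1))))) :
    (fun i => ψ (Lip.minorDoubleMatrix φ1 φ2 z (Fin.cons h g) k i c)) ∈
      NG φ1 φ2 z g k ψ := by
  have hspan : Submodule.span (PowerSeries ℂ)
      ((fun m : Fin 2 → S => fun i => ψ (m i)) ''
        (Lip.idealDouble φ1 φ2 (Jg g k) : Set (Fin 2 → S))) ≤ NG φ1 φ2 z g k ψ := by
    rw [Submodule.span_le]
    rintro _ ⟨v, hv, rfl⟩
    exact C1 φ1 φ2 z g ψ (idealDouble_le φ1 φ2 z g hz hv)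
  have hdbl : ∀ (I' : Fin k → Fin p) (J' : Fin k → Fin (r + 1)),
      (fun i => ψ (Lip.idDouble φ1 φ2 (Matrix.det (Matrix.of fun a b : Fin k =>
        (Fin.cons h g : Fin (r + 1) → Fin p → R) (J' b) (I' a))) i)) ∈
        NG φ1 φ2 z g k ψ := by
    intro I' J'
    have hm : (Matrix.det (Matrix.of fun a b : Fin k =>
        (Fin.cons h g : Fin (r + 1) → Fin p → R) (J' b) (I' a))) ∈
        Ideal.span {d : R | ∃ (I' : Fin k → Fin p) (J' : Fin k → Fin (r + 1)),
          d = Matrix.det (Matrix.of fun a b : Fin k =>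
            (Fin.cons h g : Fin (r + 1) → Fin p → R) (J' b) (I' a))} :=
      Ideal.subset_span ⟨I', J', rfl⟩
    exact hspan ((hsat hm) ψ)
  match c with
  | Sum.inl (I', J') =>
    have e : (fun i => ψ (Lip.minorDoubleMatrix φ1 φ2 z (Fin.cons h g) k i (Sum.inl (I', J')))) =
        fun i => ψ (Lip.idDouble φ1 φ2 (Matrix.det (Matrix.of fun a b : Fin k =>
          (Fin.cons h g : Fin (r + 1) → Fin p → R) (J' b) (I' a))) i) := by
      funext i
      fin_cases i <;> rfl
    rw [e]
    exact hdbl I' J'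
  | Sum.inr (i0, (I', J')) =>
    have hw : φ1 (z i0) - φ2 (z i0) ∈ W φ1 φ2 z := Ideal.subset_span ⟨i0, rfl⟩
    have hx := hdbl I' J'
    have hmem := C2 φ1 φ2 z g ψ hw hx
    have e : (fun i => ψ (Lip.minorDoubleMatrix φ1 φ2 z (Fin.cons h g) k i
        (Sum.inr (i0, (I', J'))))) =
        ![0, ψ (φ1 (z i0) - φ2 (z i0)) *
          (fun i => ψ (Lip.idDouble φ1 φ2 (Matrix.det (Matrix.of fun a b : Fin k =>
            (Fin.cons h g : Fin (r + 1) → Fin p → R) (J' b) (I' a))) i)) 1] := by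
      funext i
      fin_cases i
      · exact map_zero ψ
      · exact map_mul ψ _ _
    rw [e]
    exact hmem

lemma key (hz : ∀ α : R, φ1 α - φ2 α ∈
      Ideal.span (Set.range fun i => φ1 (z i) - φ2 (z i)))
    (h : Fin p → R)
    (hsat : ((Ideal.span {d : R | ∃ (I' : Fin k → Fin p) (J' : Fin k → Fin (r + 1)),
        d = Matrix.det (Matrix.of fun a b : Fin k =>
          (Fin.cons h g : Fin (r + 1) → Fin p → R) (J' b) (I' a))} : Ideal R) : Set R)
      ⊆ Lip.sat φ1 φ2 (Jg g k)) :
    ((Lip.I2 (Lip.minorDoubleMatrix φ1 φ2 z (Fin.cons h g) k) : Ideal S) : Set S)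
      ⊆ Lip.clIdeal (Lip.I2 (Lip.minorDoubleMatrix φ1 φ2 z g k)) := by
  intro a ha ψ
  have hle : Lip.I2 (Lip.minorDoubleMatrix φ1 φ2 z (Fin.cons h g) k) ≤
      Ideal.comap ψ (Ideal.map ψ (Lip.I2 (Lip.minorDoubleMatrix φ1 φ2 z g k))) := by
    rw [Lip.I2, Ideal.span_le]
    rintro _ ⟨c1, c2, rfl⟩
    simp only [SetLike.mem_coe, Ideal.mem_comap, map_sub, map_mul]
    have h1 := D φ1 φ2 z g hz h hsat ψ c1
    have h2 := D φ1 φ2 z g hz h hsat ψ c2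
    have hC := C3 φ1 φ2 z g ψ h1 _ h2
    beta_reduce at hC
    exact hC
  exact hle ha

end Key

end LipAux


/-- Suppose there is an ideal `I` of `O_{X×X}` with
`I · I_2((I_k(M))_D) ⊆ closure (I_{2k}(M_D))` and
`I_{2k}(h_D, M_D) ⊆ closure (I · I_2((I_k(h,M))_D))`.
If `h ∈ M_{S₃}` (i.e. `I_k(h, M) ⊆ (I_k(M))_S`) then `h ∈ M_{S₁}`
(i.e. `h_D ∈ closure (M_D)`).  The hypothesis `hcrit` encodes the Gaffney criterion
`I_{2k}(h_D, M_D) ⊆ closure (I_{2k}(M_D)) → h_D ∈ closure (M_D)`, which holds because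
`M_D` has generic rank `2k` on each component of `X × X`, `M` being of generic rank `k`
on each component of `X`. -/
theorem satThree_mem_satOne {R S : Type*} [CommRing R] [CommRing S] {p r n k : ℕ}
    (φ1 φ2 : R →+* S) (z : Fin n → R)
    (hz : ∀ α : R, φ1 α - φ2 α ∈ Ideal.span (Set.range fun i => φ1 (z i) - φ2 (z i)))
    (g : Fin r → (Fin p → R)) (h : Fin p → R) (I : Ideal S)
    (hI1 : ((I * Lip.I2 (Lip.minorDoubleMatrix φ1 φ2 z g k) : Ideal S) : Set S)
      ⊆ Lip.clIdeal (Lip.I2kM φ1 φ2 z g k))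
    (hI2 : ((Lip.I2kHM φ1 φ2 z g h k : Ideal S) : Set S)
      ⊆ Lip.clIdeal
          (I * Lip.I2 (Lip.minorDoubleMatrix φ1 φ2 z (Fin.cons h g) k)))
    (hcrit : ((Lip.I2kHM φ1 φ2 z g h k : Ideal S) : Set S)
        ⊆ Lip.clIdeal (Lip.I2kM φ1 φ2 z g k) →
      Lip.double φ1 φ2 h ∈
        Lip.curveCl (Submodule.span S
          (Lip.double φ1 φ2 '' (Submodule.span R (Set.range g) : Set (Fin p → R)))))
    (hsat : ((Ideal.span {d : R | ∃ (I' : Fin k → Fin p) (J' : Fin k → Fin (r + 1)),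
        d = Matrix.det (Matrix.of fun a b : Fin k =>
          (Fin.cons h g : Fin (r + 1) → Fin p → R) (J' b) (I' a))} : Ideal R) : Set R)
      ⊆ Lip.sat φ1 φ2
          (Ideal.span {d : R | ∃ (I' : Fin k → Fin p) (J' : Fin k → Fin r),
            d = Matrix.det (Matrix.of fun a b : Fin k => g (J' b) (I' a))})) :
    Lip.double φ1 φ2 h ∈
      Lip.curveCl (Submodule.span S
        (Lip.double φ1 φ2 '' (Submodule.span R (Set.range g) : Set (Fin p → R)))) := by
  refine hcrit ?_
  intro x hx
  exact LipAux.cl_trans hI1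
    (LipAux.cl_trans (LipAux.mul_cl (LipAux.key φ1 φ2 z g hz h hsat)) (hI2 hx))
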